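/- Fix a standard Young tableau T of shape λ (a partition of d of length < n = dim V) and a basis v_1,...,v_n of V. The set { c_λ^T(v_{(T,S)}) : S a semistandard tableau of shape λ with entries in {1,...,n} } is a basis of the Schur module S_λ^T V = c_λ^T(V^{⊗d}). -/

import Mathlib

noncomputable section
namespace SchurApolarity

open scoped TensorProduct

variable (K : Type) [Field K] (V : Type) [AddCommGroup V] [Module K V]

/-- The set of boxes of a Young diagram described by its column lengths `m : Fin N → ℕ`:
the box `⟨j, i⟩` lies in column `j` and row `i`. -/
abbrev Cell (N : ℕ) (m : Fin N → ℕ) : Type := Σ j : Fin N, Fin (m j)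

variable (d : ℕ)

/-- The endomorphism of `V^{⊗ d}` permuting the tensor factors by `π`:
on pure tensors it sends `⊗ᵢ v i` to `⊗ᵢ v (π i)`. -/
def tpermMap (π : Equiv.Perm (Fin d)) : (⨂[K] _x : Fin d, V) →ₗ[K] ⨂[K] _x : Fin d, V :=
  (PiTensorProduct.reindex K (fun _ : Fin d => V) π.symm).toLinearMap

variable {N : ℕ} (m : Fin N → ℕ)

/-- The subgroup (as a finset) of the permutations of `{1,…,d}` which fix the content of
every row of the tableau `T`. -/
def rowPerms (T : Fin d ≃ Cell N m) : Finset (Equiv.Perm (Fin d)) :=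
  haveI : DecidablePred fun σ : Equiv.Perm (Fin d) =>
      ∀ x, ((T (σ x)).2 : ℕ) = ((T x).2 : ℕ) := fun _ => Classical.propDecidable _
  Finset.univ.filter fun σ => ∀ x, ((T (σ x)).2 : ℕ) = ((T x).2 : ℕ)

/-- The subgroup (as a finset) of the permutations of `{1,…,d}` which fix the content of
every column of the tableau `T`. -/
def colPerms (T : Fin d ≃ Cell N m) : Finset (Equiv.Perm (Fin d)) :=
  haveI : DecidablePred fun σ : Equiv.Perm (Fin d) => ∀ x, (T (σ x)).1 = (T x).1 :=
    fun _ => Classical.propDecidable _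
  Finset.univ.filter fun σ => ∀ x, (T (σ x)).1 = (T x).1

/-- The Young symmetrizer `c_λ^T : V^{⊗d} → V^{⊗d}`, sending `v₁ ⊗ ⋯ ⊗ v_d` to
`Σ_{τ ∈ C_λ} Σ_{σ ∈ R_λ} sign(τ) v_{τ(σ(1))} ⊗ ⋯ ⊗ v_{τ(σ(d))}`. -/
def youngSym (T : Fin d ≃ Cell N m) : (⨂[K] _x : Fin d, V) →ₗ[K] ⨂[K] _x : Fin d, V :=
  ∑ τ ∈ colPerms d m T, ∑ σ ∈ rowPerms d m T,
    ((Equiv.Perm.sign τ : ℤ) : K) • tpermMap K V d (τ * σ)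

/-- The column antisymmetrizer `b_λ^T : V^{⊗d} → V^{⊗d}`. -/
def colAntisym (T : Fin d ≃ Cell N m) : (⨂[K] _x : Fin d, V) →ₗ[K] ⨂[K] _x : Fin d, V :=
  ∑ τ ∈ colPerms d m T, ((Equiv.Perm.sign τ : ℤ) : K) • tpermMap K V d τ

/-- `T` is a standard tableau: the entries (given by `T.symm`) strictly increase down the
columns and along the rows. -/
def IsStdTableau (T : Fin d ≃ Cell N m) : Prop :=
  (∀ x y : Cell N m, x.1 = y.1 → (x.2 : ℕ) < (y.2 : ℕ) → T.symm x < T.symm y) ∧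
  (∀ x y : Cell N m, (x.2 : ℕ) = (y.2 : ℕ) → x.1 < y.1 → T.symm x < T.symm y)

/-- A filling `S` of the diagram with entries in `{1,…,n}` is semistandard: the rows are
weakly increasing from left to right and the columns strictly increasing from top to
bottom. -/
def IsSemistdFilling {n : ℕ} (S : Cell N m → Fin n) : Prop :=
  (∀ x y : Cell N m, (x.2 : ℕ) = (y.2 : ℕ) → x.1 ≤ y.1 → S x ≤ S y) ∧
  (∀ x y : Cell N m, x.1 = y.1 → (x.2 : ℕ) < (y.2 : ℕ) → S x < S y)

end SchurApolarity

noncomputable section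
namespace Aux

open scoped TensorProduct
open Equiv Finset

variable {K V : Type} [Field K] [AddCommGroup V] [Module K V]
variable {n : ℕ} (bv : Module.Basis (Fin n) K V) {N : ℕ} {m : Fin N → ℕ} {d : ℕ}

open SchurApolarity

lemma perm_apply_inv_self {α : Type*} (f : Equiv.Perm α) (x : α) : f (f⁻¹ x) = x :=
  f.apply_symm_apply x

lemma perm_inv_apply_self {α : Type*} (f : Equiv.Perm α) (x : α) : f⁻¹ (f x) = x :=
  f.symm_apply_apply x

/-- basis-indexed pure tensor -/
def tb (f : Fin d → Fin n) : ⨂[K] _x : Fin d, V :=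
  PiTensorProduct.tprod K fun i => bv (f i)

/-- coordinate functional -/
def phi (g : Fin d → Fin n) : (⨂[K] _x : Fin d, V) →ₗ[K] K :=
  PiTensorProduct.lift
    ((MultilinearMap.mkPiAlgebra K (Fin d) K).compLinearMap fun i => bv.coord (g i))

lemma phi_tb (f g : Fin d → Fin n) :
    phi bv g (tb bv f) = if f = g then 1 else 0 := by
  classical
  simp only [phi, tb, PiTensorProduct.lift.tprod, MultilinearMap.compLinearMap_apply,
    MultilinearMap.mkPiAlgebra_apply, Module.Basis.coord_apply, Module.Basis.repr_self]
  rw [show (∏ i, (Finsupp.single (f i) (1:K)) (g i)) = ∏ i, if f i = g i then (1:K) else 0 from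
    Finset.prod_congr rfl fun i _ => by rw [Finsupp.single_apply]]
  rw [Finset.prod_boole]
  simp [funext_iff]

/-- sign as element of K -/
def sgn (π : Equiv.Perm (Fin d)) : K := ((Equiv.Perm.sign π : ℤ) : K)

lemma sgn_mul (a b : Equiv.Perm (Fin d)) : (sgn (a*b) : K) = sgn a * sgn b := by
  simp [sgn, Equiv.Perm.sign_mul]

lemma sgn_sq (a : Equiv.Perm (Fin d)) : (sgn a : K) * sgn a = 1 := by
  simp only [sgn]
  rw [← Int.cast_mul, ← Units.val_mul, Int.units_mul_self]
  simp

lemma sgn_smul_sgn_smul {M : Type} [AddCommGroup M] [Module K M] (a : Equiv.Perm (Fin d))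
    (x : M) : (sgn a : K) • ((sgn a : K) • x) = x := by
  rw [smul_smul, sgn_sq, one_smul]

lemma tperm_tb (π : Equiv.Perm (Fin d)) (f : Fin d → Fin n) :
    tpermMap K V d π (tb bv f) = tb bv (f ∘ π) := by
  simp only [tpermMap, tb, LinearEquiv.coe_coe, PiTensorProduct.reindex_tprod,
    Equiv.symm_symm]
  rfl

lemma young_tb (T : Fin d ≃ Cell N m) (f : Fin d → Fin n) :
    youngSym K V d m T (tb bv f) =
      ∑ τ ∈ colPerms d m T, ∑ σ ∈ rowPerms d m T, (sgn τ : K) • tb bv (f ∘ τ ∘ σ) := by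
  simp only [youngSym, LinearMap.sum_apply, LinearMap.smul_apply]
  refine Finset.sum_congr rfl fun τ _ => Finset.sum_congr rfl fun σ _ => ?_
  rw [tperm_tb]
  rfl

lemma mem_colPerms {T : Fin d ≃ Cell N m} {τ : Equiv.Perm (Fin d)} :
    τ ∈ colPerms d m T ↔ ∀ x, (T (τ x)).1 = (T x).1 := by
  classical
  simp [colPerms]

lemma mem_rowPerms {T : Fin d ≃ Cell N m} {σ : Equiv.Perm (Fin d)} :
    σ ∈ rowPerms d m T ↔ ∀ x, ((T (σ x)).2 : ℕ) = ((T x).2 : ℕ) := by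
  classical
  simp [rowPerms]

lemma colPerms_mul {T : Fin d ≃ Cell N m} {a b : Equiv.Perm (Fin d)}
    (ha : a ∈ colPerms d m T) (hb : b ∈ colPerms d m T) : a * b ∈ colPerms d m T := by
  rw [mem_colPerms] at *
  intro x
  simpa [ha (b x)] using hb x

lemma colPerms_inv {T : Fin d ≃ Cell N m} {a : Equiv.Perm (Fin d)}
    (ha : a ∈ colPerms d m T) : a⁻¹ ∈ colPerms d m T := by
  rw [mem_colPerms] at *
  intro x
  have h2 := ha (a⁻¹ x)
  rw [perm_apply_inv_self] at h2
  exact h2.symm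

lemma rowPerms_mul {T : Fin d ≃ Cell N m} {a b : Equiv.Perm (Fin d)}
    (ha : a ∈ rowPerms d m T) (hb : b ∈ rowPerms d m T) : a * b ∈ rowPerms d m T := by
  rw [mem_rowPerms] at *
  intro x
  simpa [ha (b x)] using hb x

lemma rowPerms_inv {T : Fin d ≃ Cell N m} {a : Equiv.Perm (Fin d)}
    (ha : a ∈ rowPerms d m T) : a⁻¹ ∈ rowPerms d m T := by
  rw [mem_rowPerms] at *
  intro x
  have h2 := ha (a⁻¹ x)
  rw [perm_apply_inv_self] at h2
  exact h2.symm

/-- reindex a sum over a multiplicatively closed finset by left translation -/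
lemma sum_mul_left {G M : Type} [Group G] [AddCommMonoid M] (s : Finset G)
    (hmul : ∀ a ∈ s, ∀ b ∈ s, a * b ∈ s) (hinv : ∀ a ∈ s, a⁻¹ ∈ s)
    {a : G} (ha : a ∈ s) (F : G → M) :
    ∑ g ∈ s, F (a * g) = ∑ g ∈ s, F g := by
  refine Finset.sum_nbij' (fun g => a * g) (fun g => a⁻¹ * g) ?_ ?_ ?_ ?_ ?_
  · intro g hg; exact hmul _ ha _ hg
  · intro g hg; exact hmul _ (hinv _ ha) _ hg
  · intro g _; simp
  · intro g _; simp
  · intro g _; rfl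

lemma sum_mul_right {G M : Type} [Group G] [AddCommMonoid M] (s : Finset G)
    (hmul : ∀ a ∈ s, ∀ b ∈ s, a * b ∈ s) (hinv : ∀ a ∈ s, a⁻¹ ∈ s)
    {a : G} (ha : a ∈ s) (F : G → M) :
    ∑ g ∈ s, F (g * a) = ∑ g ∈ s, F g := by
  refine Finset.sum_nbij' (fun g => g * a) (fun g => g * a⁻¹) ?_ ?_ ?_ ?_ ?_
  · intro g hg; exact hmul _ hg _ ha
  · intro g hg; exact hmul _ hg _ (hinv _ ha)
  · intro g _; simp
  · intro g _; simp
  · intro g _; rfl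

/-- the column relation: precomposing with a column permutation changes the
Young symmetrizer image by a sign -/
lemma young_col (T : Fin d ≃ Cell N m) (f : Fin d → Fin n) {τ₀ : Equiv.Perm (Fin d)}
    (h : τ₀ ∈ colPerms d m T) :
    youngSym K V d m T (tb bv (f ∘ τ₀)) =
      (sgn τ₀ : K) • youngSym K V d m T (tb bv f) := by
  rw [young_tb, young_tb, Finset.smul_sum]
  rw [← sum_mul_left (colPerms d m T) (fun a ha b hb => colPerms_mul ha hb)
    (fun a ha => colPerms_inv ha) h
    (fun τ => (sgn τ₀ : K) • ∑ σ ∈ rowPerms d m T, (sgn τ : K) • tb bv (f ∘ τ ∘ σ))]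
  refine Finset.sum_congr rfl fun τ _ => ?_
  rw [Finset.smul_sum]
  refine Finset.sum_congr rfl fun σ _ => ?_
  rw [smul_smul, sgn_mul, ← mul_assoc, sgn_sq, one_mul, Equiv.Perm.coe_mul]
  rfl

/-- transport a cell permutation to a permutation of tensor positions -/
def finPerm (T : Fin d ≃ Cell N m) (q : Equiv.Perm (Cell N m)) : Equiv.Perm (Fin d) :=
  T.symm.permCongr q

lemma finPerm_apply (T : Fin d ≃ Cell N m) (q : Equiv.Perm (Cell N m)) (x : Fin d) :
    finPerm T q x = T.symm (q (T x)) := rfl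

lemma T_finPerm (T : Fin d ≃ Cell N m) (q : Equiv.Perm (Cell N m)) (x : Fin d) :
    T (finPerm T q x) = q (T x) := by
  rw [finPerm_apply, Equiv.apply_symm_apply]

lemma sgn_finPerm (T : Fin d ≃ Cell N m) (q : Equiv.Perm (Cell N m)) :
    (sgn (finPerm T q) : K) = ((Equiv.Perm.sign q : ℤ) : K) := by
  unfold sgn finPerm
  rw [Equiv.Perm.sign_permCongr]

lemma finPerm_mem_col (T : Fin d ≃ Cell N m) {q : Equiv.Perm (Cell N m)}
    (hq : ∀ z, (q z).1 = z.1) : finPerm T q ∈ colPerms d m T := by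
  rw [mem_colPerms]
  intro x
  rw [T_finPerm]
  exact hq (T x)

lemma comp_finPerm (T : Fin d ≃ Cell N m) (S : Cell N m → Fin n)
    (q : Equiv.Perm (Cell N m)) : (S ∘ T) ∘ (finPerm T q) = S ∘ q ∘ T := by
  funext x
  simp [Function.comp, T_finPerm]

/-- composing with a column-preserving cell permutation multiplies the symmetrized
tensor by the sign of the permutation -/
lemma young_comp_col (T : Fin d ≃ Cell N m) (S : Cell N m → Fin n)
    {q : Equiv.Perm (Cell N m)} (hq : ∀ z, (q z).1 = z.1) :
    youngSym K V d m T (tb bv (S ∘ q ∘ T)) =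
      ((Equiv.Perm.sign q : ℤ) : K) • youngSym K V d m T (tb bv (S ∘ T)) := by
  rw [← comp_finPerm, young_col bv T _ (finPerm_mem_col T hq), sgn_finPerm]

lemma eq_self_neg_zero {M : Type} [AddCommGroup M] [Module K M] [CharZero K]
    {v : M} (h : v = -v) : v = 0 := by
  rw [eq_neg_iff_add_eq_zero, ← two_smul K] at h
  rcases smul_eq_zero.1 h with h' | h'
  · exact absurd h' two_ne_zero
  · exact h'

/-- a repeated entry in a column kills the symmetrized tensor -/
lemma young_repeat_zero [CharZero K] (T : Fin d ≃ Cell N m) (S : Cell N m → Fin n)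
    {x y : Cell N m} (hne : x ≠ y) (hcol : x.1 = y.1) (hval : S x = S y) :
    youngSym K V d m T (tb bv (S ∘ T)) = 0 := by
  classical
  have hq : ∀ z, ((Equiv.swap x y) z).1 = z.1 := by
    intro z
    rcases eq_or_ne z x with rfl | hzx
    · rw [Equiv.swap_apply_left]; exact hcol.symm
    rcases eq_or_ne z y with rfl | hzy
    · rw [Equiv.swap_apply_right]; exact hcol
    · rw [Equiv.swap_apply_of_ne_of_ne hzx hzy]
  have hS : S ∘ (Equiv.swap x y) = S := by
    funext z
    rcases eq_or_ne z x with rfl | hzx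
    · simp [Equiv.swap_apply_left, hval.symm]
    rcases eq_or_ne z y with rfl | hzy
    · simp [Equiv.swap_apply_right, hval]
    · simp [Equiv.swap_apply_of_ne_of_ne hzx hzy]
  have h := young_comp_col bv T S hq
  rw [show S ∘ (Equiv.swap x y) ∘ ⇑T = S ∘ ⇑T by rw [← Function.comp_assoc, hS]] at h
  rw [Equiv.Perm.sign_swap hne] at h
  apply eq_self_neg_zero (K := K)
  simpa using h

lemma cellExt {z w : Cell N m} (h1 : z.1 = w.1) (h2 : (z.2 : ℕ) = (w.2 : ℕ)) : z = w := by
  obtain ⟨a, i⟩ := z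
  obtain ⟨b, k⟩ := w
  dsimp at h1 h2
  subst h1
  exact congrArg (Sigma.mk a) (Fin.ext h2)

/-- permutations of the cells supported on a finite set `X` -/
def permsOn (X : Finset (Cell N m)) : Finset (Equiv.Perm (Cell N m)) :=
  haveI : DecidablePred fun g : Equiv.Perm (Cell N m) => ∀ z ∉ X, g z = z :=
    fun _ => Classical.propDecidable _
  Finset.univ.filter fun g => ∀ z ∉ X, g z = z

lemma mem_permsOn {X : Finset (Cell N m)} {g : Equiv.Perm (Cell N m)} :
    g ∈ permsOn X ↔ ∀ z ∉ X, g z = z := by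
  classical
  simp [permsOn]

lemma permsOn_maps {X : Finset (Cell N m)} {g : Equiv.Perm (Cell N m)}
    (hg : g ∈ permsOn X) {z : Cell N m} (hz : z ∈ X) : g z ∈ X := by
  rw [mem_permsOn] at hg
  by_contra hgz
  have h2 : g z = z := g.injective (hg _ hgz)
  rw [h2] at hgz
  exact hgz hz

lemma permsOn_one {X : Finset (Cell N m)} : (1 : Equiv.Perm (Cell N m)) ∈ permsOn X := by
  rw [mem_permsOn]; intro z _; rfl

lemma permsOn_mul {X : Finset (Cell N m)} {a b : Equiv.Perm (Cell N m)}
    (ha : a ∈ permsOn X) (hb : b ∈ permsOn X) : a * b ∈ permsOn X := by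
  rw [mem_permsOn] at *
  intro z hz
  simp only [Equiv.Perm.mul_apply, hb z hz, ha z hz]

lemma permsOn_inv {X : Finset (Cell N m)} {a : Equiv.Perm (Cell N m)}
    (ha : a ∈ permsOn X) : a⁻¹ ∈ permsOn X := by
  rw [mem_permsOn] at *
  intro z hz
  conv_lhs => rw [← ha z hz]
  simp

lemma swap_mem_permsOn {X : Finset (Cell N m)} {x y : Cell N m} (hx : x ∈ X) (hy : y ∈ X) :
    Equiv.swap x y ∈ permsOn X := by
  classical
  rw [mem_permsOn]
  intro z hz
  exact Equiv.swap_apply_of_ne_of_ne (fun h => hz (h ▸ hx)) (fun h => hz (h ▸ hy))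

/-- expansion of the Young symmetrizer on a cell filling -/
lemma young_expand (T : Fin d ≃ Cell N m) (W : Cell N m → Fin n) :
    youngSym K V d m T (tb bv (W ∘ T)) =
      ∑ τ ∈ colPerms d m T, ∑ σ ∈ rowPerms d m T,
        (sgn τ : K) • tb bv (fun x => W (T (τ (σ x)))) := by
  rw [young_tb]
  rfl

/-- pigeonhole: two columns with more cells than rows must share a row -/
lemma pigeon (j₁ j₂ : Fin N) (hj : j₁ ≠ j₂) (hmle : m j₂ ≤ m j₁) (Y : Finset (Cell N m))
    (hY : ∀ x ∈ Y, x.1 = j₁ ∨ x.1 = j₂) (hcard : m j₁ < Y.card) :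
    ∃ (r : ℕ) (hr₁ : r < m j₁) (hr₂ : r < m j₂),
      (⟨j₁, ⟨r, hr₁⟩⟩ : Cell N m) ∈ Y ∧ (⟨j₂, ⟨r, hr₂⟩⟩ : Cell N m) ∈ Y := by
  classical
  set Y₁ := Y.filter (fun z => z.1 = j₁) with hY₁
  set Y₂ := Y.filter (fun z => z.1 = j₂) with hY₂
  have hY₂' : Y₂ = Y.filter (fun z => ¬ z.1 = j₁) := by
    rw [hY₂]
    apply Finset.filter_congr
    intro x hx
    rcases hY x hx with h | h <;> simp [h, hj.symm, hj]
  have hsplit : Y₁.card + Y₂.card = Y.card := by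
    rw [hY₁, hY₂']
    exact Finset.card_filter_add_card_filter_not _
  set R₁ := Y₁.image (fun z : Cell N m => (z.2 : ℕ)) with hR₁
  set R₂ := Y₂.image (fun z : Cell N m => (z.2 : ℕ)) with hR₂
  have hinj : ∀ (j : Fin N), Set.InjOn (fun z : Cell N m => (z.2 : ℕ))
      {z : Cell N m | z.1 = j} := by
    intro j z hz w hw h
    exact cellExt (hz.trans hw.symm) h
  have hcard₁ : R₁.card = Y₁.card := by
    apply Finset.card_image_of_injOn
    intro z hz w hw h
    exact cellExt (((Finset.mem_filter.1 hz).2).trans ((Finset.mem_filter.1 hw).2).symm) h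
  have hcard₂ : R₂.card = Y₂.card := by
    apply Finset.card_image_of_injOn
    intro z hz w hw h
    exact cellExt (((Finset.mem_filter.1 hz).2).trans ((Finset.mem_filter.1 hw).2).symm) h
  have hsub : R₁ ∪ R₂ ⊆ Finset.range (m j₁) := by
    intro r hr
    rcases Finset.mem_union.1 hr with h | h
    · obtain ⟨z, hz, rfl⟩ := Finset.mem_image.1 h
      have hz1 := (Finset.mem_filter.1 hz).2
      rw [Finset.mem_range]
      calc ((z.2 : ℕ)) < m z.1 := z.2.isLt
        _ = m j₁ := by rw [hz1]
    · obtain ⟨z, hz, rfl⟩ := Finset.mem_image.1 h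
      have hz1 := (Finset.mem_filter.1 hz).2
      rw [Finset.mem_range]
      calc ((z.2 : ℕ)) < m z.1 := z.2.isLt
        _ = m j₂ := by rw [hz1]
        _ ≤ m j₁ := hmle
  have hinter : (R₁ ∩ R₂).Nonempty := by
    rw [← Finset.card_pos]
    have h1 : (R₁ ∪ R₂).card + (R₁ ∩ R₂).card = R₁.card + R₂.card :=
      Finset.card_union_add_card_inter _ _
    have h2 : (R₁ ∪ R₂).card ≤ m j₁ := by
      calc (R₁ ∪ R₂).card ≤ (Finset.range (m j₁)).card := Finset.card_le_card hsub
        _ = m j₁ := Finset.card_range _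
    omega
  obtain ⟨r, hr⟩ := hinter
  obtain ⟨hrR₁, hrR₂⟩ := Finset.mem_inter.1 hr
  obtain ⟨z₁, hz₁, hz₁r⟩ := Finset.mem_image.1 hrR₁
  obtain ⟨z₂, hz₂, hz₂r⟩ := Finset.mem_image.1 hrR₂
  have hz₁c := (Finset.mem_filter.1 hz₁).2
  have hz₂c := (Finset.mem_filter.1 hz₂).2
  have hr₁ : r < m j₁ := by
    rw [← hz₁r]
    calc ((z₁.2 : ℕ)) < m z₁.1 := z₁.2.isLt
      _ = m j₁ := by rw [hz₁c]
  have hr₂ : r < m j₂ := by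
    rw [← hz₂r]
    calc ((z₂.2 : ℕ)) < m z₂.1 := z₂.2.isLt
      _ = m j₂ := by rw [hz₂c]
  refine ⟨r, hr₁, hr₂, ?_, ?_⟩
  · have : (⟨j₁, ⟨r, hr₁⟩⟩ : Cell N m) = z₁ := cellExt hz₁c.symm (by simpa using hz₁r.symm)
    rw [this]
    exact (Finset.mem_filter.1 hz₁).1
  · have : (⟨j₂, ⟨r, hr₂⟩⟩ : Cell N m) = z₂ := cellExt hz₂c.symm (by simpa using hz₂r.symm)
    rw [this]
    exact (Finset.mem_filter.1 hz₂).1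

/-- **Garnir relation**: the signed sum of symmetrized tensors over all permutations
supported on a set of cells contained in two columns, with more cells than the longer
column, vanishes. -/
lemma garnir [CharZero K] (T : Fin d ≃ Cell N m) (S : Cell N m → Fin n)
    (X : Finset (Cell N m)) (j₁ j₂ : Fin N) (hj : j₁ ≠ j₂) (hmle : m j₂ ≤ m j₁)
    (hX : ∀ x ∈ X, x.1 = j₁ ∨ x.1 = j₂) (hcard : m j₁ < X.card) :
    ∑ g ∈ permsOn X, ((Equiv.Perm.sign g : ℤ) : K) •
        youngSym K V d m T (tb bv ((S ∘ g) ∘ T)) = 0 := by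
  classical
  have expand : ∀ g : Equiv.Perm (Cell N m),
      youngSym K V d m T (tb bv ((S ∘ g) ∘ T)) =
        ∑ τ ∈ colPerms d m T, ∑ σ ∈ rowPerms d m T,
          (sgn τ : K) • tb bv (fun x => S (g (T (τ (σ x))))) :=
    fun g => young_expand bv T (S ∘ g)
  rw [Finset.sum_congr rfl (fun g _ => by rw [expand g, Finset.smul_sum])]
  rw [Finset.sum_comm]
  apply Finset.sum_eq_zero
  intro τ hτ
  set cτ : Equiv.Perm (Cell N m) := T.permCongr τ with hcτ
  have hcτT : ∀ x : Fin d, cτ (T x) = T (τ x) := by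
    intro x
    rw [hcτ, Equiv.permCongr_apply, Equiv.symm_apply_apply]
  have hcτcol : ∀ y : Cell N m, (cτ y).1 = y.1 := by
    intro y
    have h1 := (mem_colPerms.1 hτ) (T.symm y)
    have h2 : cτ y = T (τ (T.symm y)) := by
      rw [hcτ, Equiv.permCongr_apply]
    rw [h2, h1, Equiv.apply_symm_apply]
  set Y := X.image (fun z => cτ.symm z) with hY
  have hYmem : ∀ z : Cell N m, z ∈ Y ↔ cτ z ∈ X := by
    intro z
    rw [hY, Finset.mem_image]
    constructor
    · rintro ⟨a, ha, rfl⟩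
      rwa [Equiv.apply_symm_apply]
    · intro h
      exact ⟨cτ z, h, by rw [Equiv.symm_apply_apply]⟩
  have hYcol : ∀ z ∈ Y, z.1 = j₁ ∨ z.1 = j₂ := by
    intro z hz
    have := hX _ ((hYmem z).1 hz)
    rwa [hcτcol z] at this
  have hYcard : m j₁ < Y.card := by
    rw [hY, Finset.card_image_of_injective _ cτ.symm.injective]
    exact hcard
  obtain ⟨r, hr₁, hr₂, hzy₁, hzy₂⟩ := pigeon j₁ j₂ hj hmle Y hYcol hYcard
  set z₁ : Cell N m := ⟨j₁, ⟨r, hr₁⟩⟩ with hz₁def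
  set z₂ : Cell N m := ⟨j₂, ⟨r, hr₂⟩⟩ with hz₂def
  have hz12 : z₁ ≠ z₂ := by
    intro h
    exact hj (congrArg Sigma.fst h)
  set x₁ : Cell N m := cτ z₁ with hx₁def
  set x₂ : Cell N m := cτ z₂ with hx₂def
  have hx₁X : x₁ ∈ X := (hYmem z₁).1 hzy₁
  have hx₂X : x₂ ∈ X := (hYmem z₂).1 hzy₂
  have hx12 : x₁ ≠ x₂ := fun h => hz12 (cτ.injective h)
  set t : Equiv.Perm (Cell N m) := Equiv.swap z₁ z₂ with ht
  set w : Equiv.Perm (Cell N m) := Equiv.swap x₁ x₂ with hw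
  have hwX : w ∈ permsOn X := swap_mem_permsOn hx₁X hx₂X
  have hkey : ∀ z, w (cτ (t z)) = cτ z := by
    intro z
    rcases eq_or_ne z z₁ with rfl | h1
    · rw [ht, hw, Equiv.swap_apply_left, ← hx₂def, Equiv.swap_apply_right]
    rcases eq_or_ne z z₂ with rfl | h2
    · rw [ht, hw, Equiv.swap_apply_right, ← hx₁def, Equiv.swap_apply_left]
    · rw [ht, Equiv.swap_apply_of_ne_of_ne h1 h2, hw,
        Equiv.swap_apply_of_ne_of_ne (fun h => h1 (cτ.injective h))
          (fun h => h2 (cτ.injective h))]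
  set u : Equiv.Perm (Fin d) := finPerm T t with hu_def
  have hu : u ∈ rowPerms d m T := by
    rw [mem_rowPerms]
    intro x
    rw [hu_def, T_finPerm]
    have trow : ∀ y : Cell N m, (((t y).2 : ℕ)) = ((y.2 : ℕ)) := by
      intro y
      rcases eq_or_ne y z₁ with rfl | h1
      · rw [ht, Equiv.swap_apply_left]
      rcases eq_or_ne y z₂ with rfl | h2
      · rw [ht, Equiv.swap_apply_right]
      · rw [ht, Equiv.swap_apply_of_ne_of_ne h1 h2]
    exact trow (T x)
  have key2 : ∀ (g : Equiv.Perm (Cell N m)) (σ : Equiv.Perm (Fin d)),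
      (fun x => S ((g * w) (T (τ ((u * σ) x))))) = (fun x => S (g (T (τ (σ x))))) := by
    intro g σ
    funext x
    have h3 : T ((u * σ) x) = t (T (σ x)) := by
      rw [Equiv.Perm.mul_apply, hu_def, T_finPerm]
    calc S ((g * w) (T (τ ((u * σ) x))))
        = S (g (w (cτ (T ((u * σ) x))))) := by rw [hcτT]; rfl
      _ = S (g (w (cτ (t (T (σ x)))))) := by rw [h3]
      _ = S (g (cτ (T (σ x)))) := by rw [hkey]
      _ = S (g (T (τ (σ x)))) := by rw [hcτT]
  -- the inner sum over g vanishes since it equals its own negation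
  apply eq_self_neg_zero (K := K)
  conv_lhs =>
    rw [← sum_mul_right (permsOn X) (fun a ha b hb => permsOn_mul ha hb)
      (fun a ha => permsOn_inv ha) hwX
      (fun g => ((Equiv.Perm.sign g : ℤ) : K) •
        ∑ σ ∈ rowPerms d m T, (sgn τ : K) • tb bv (fun x => S (g (T (τ (σ x)))))) ]
  rw [← Finset.sum_neg_distrib]
  refine Finset.sum_congr rfl fun g hg => ?_
  have hinner :
      (∑ σ ∈ rowPerms d m T, (sgn τ : K) • tb bv (fun x => S ((g * w) (T (τ (σ x)))))) =
        ∑ σ ∈ rowPerms d m T, (sgn τ : K) • tb bv (fun x => S (g (T (τ (σ x))))) := by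
    rw [← sum_mul_left (rowPerms d m T) (fun a ha b hb => rowPerms_mul ha hb)
      (fun a ha => rowPerms_inv ha) hu
      (fun σ => (sgn τ : K) • tb bv (fun x => S ((g * w) (T (τ (σ x))))))]
    exact Finset.sum_congr rfl fun σ _ => by rw [key2 g σ]
  rw [hinner]
  have hsgn : ((Equiv.Perm.sign (g * w) : ℤ) : K) = -((Equiv.Perm.sign g : ℤ) : K) := by
    rw [Equiv.Perm.sign_mul, hw, Equiv.Perm.sign_swap hx12]
    push_cast
    ring
  rw [hsgn, neg_smul]

/-- column-strict fillings -/
def ColStrict (S : Cell N m → Fin n) : Prop :=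
  ∀ x y : Cell N m, x.1 = y.1 → (x.2 : ℕ) < (y.2 : ℕ) → S x < S y

lemma ColStrict.le {S : Cell N m → Fin n} (h : ColStrict S) {x y : Cell N m}
    (hc : x.1 = y.1) (hr : (x.2 : ℕ) ≤ (y.2 : ℕ)) : S x ≤ S y := by
  rcases eq_or_lt_of_le hr with h' | h'
  · rw [cellExt hc h']
  · exact le_of_lt (h x y hc h')

/-- sorting each column of a filling with distinct column entries -/
lemma exists_sortPerm (S : Cell N m → Fin n)
    (hinj : ∀ x y : Cell N m, x.1 = y.1 → S x = S y → x = y) :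
    ∃ q : Equiv.Perm (Cell N m), (∀ z, (q z).1 = z.1) ∧ ColStrict (fun z => S (q z)) := by
  classical
  refine ⟨Equiv.sigmaCongrRight (fun j => Tuple.sort (fun i => S ⟨j, i⟩)), fun z => rfl, ?_⟩
  rintro ⟨j, i⟩ ⟨j', i'⟩ hc hr
  dsimp at hc
  subst hc
  have hmono : Monotone ((fun i => S ⟨j, i⟩) ∘ Tuple.sort (fun i => S ⟨j, i⟩)) :=
    Tuple.monotone_sort _
  have hinj' : Function.Injective ((fun i => S ⟨j, i⟩) ∘ Tuple.sort (fun i => S ⟨j, i⟩)) := by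
    apply Function.Injective.comp
    · intro a b hab
      have := hinj ⟨j, a⟩ ⟨j, b⟩ rfl hab
      simpa using this
    · exact (Tuple.sort _).injective
  exact (hmono.strictMono_of_injective hinj') (Fin.lt_def.2 hr)

/-- the weight used in the straightening induction -/
def mu (S : Cell N m → Fin n) : ℕ := ∑ z : Cell N m, (z.1 : ℕ) * (S z : ℕ)

lemma mu_comp_colperm (S : Cell N m → Fin n) (q : Equiv.Perm (Cell N m))
    (hq : ∀ z, (q z).1 = z.1) : mu (fun z => S (q z)) = mu S := by
  unfold mu
  calc ∑ z : Cell N m, (z.1 : ℕ) * (S (q z) : ℕ)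
      = ∑ z : Cell N m, ((q z).1 : ℕ) * (S (q z) : ℕ) := by
        refine Finset.sum_congr rfl fun z _ => by rw [hq z]
    _ = ∑ z : Cell N m, (z.1 : ℕ) * (S z : ℕ) := Equiv.sum_comp q (fun z => (z.1 : ℕ) * (S z : ℕ))

/-- the weight strictly increases under a Garnir permutation which moves cells
between the two columns -/
lemma mu_lt_garnir (S : Cell N m → Fin n) (hcs : ColStrict S)
    {j₁ j₂ : Fin N} (hjlt : j₁ < j₂) {i₁ : Fin (m j₁)} {i₂ : Fin (m j₂)}
    (hrow : (i₁ : ℕ) = (i₂ : ℕ)) (hviol : S ⟨j₂, i₂⟩ < S ⟨j₁, i₁⟩)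
    (X : Finset (Cell N m))
    (hXmem : ∀ z : Cell N m, z ∈ X ↔
      (z.1 = j₁ ∧ (i₁ : ℕ) ≤ (z.2 : ℕ)) ∨ (z.1 = j₂ ∧ (z.2 : ℕ) ≤ (i₂ : ℕ)))
    {g : Equiv.Perm (Cell N m)} (hg : g ∈ permsOn X)
    (hgnc : ¬ ∀ z, (g z).1 = z.1) :
    mu S < mu (fun z => S (g z)) := by
  classical
  have hjne : j₁ ≠ j₂ := ne_of_lt hjlt
  have hfix : ∀ z ∉ X, g z = z := mem_permsOn.1 hg
  have hginv : g⁻¹ ∈ permsOn X := permsOn_inv hg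
  have hfix' : ∀ z ∉ X, g⁻¹ z = z := mem_permsOn.1 hginv
  have hmapsinv : ∀ z ∈ X, g⁻¹ z ∈ X := fun z hz => permsOn_maps hginv hz
  -- a cell of column j₁ must come from column j₂
  have exA : ∃ z : Cell N m, z ∈ X ∧ z.1 = j₁ ∧ (g⁻¹ z).1 = j₂ := by
    by_contra hno
    push_neg at hno
    have hA : ∀ z ∈ X, z.1 = j₁ → (g⁻¹ z).1 = j₁ := by
      intro z hz hz1
      have h1 := hmapsinv z hz
      rcases (hXmem _).1 h1 with h | h
      · exact h.1
      · exact absurd h.1 (hno z hz hz1)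
    -- the set of column-j₁ cells of X is preserved by g⁻¹
    set XA := X.filter (fun z => z.1 = j₁) with hXA
    have himg : XA.image (fun z => g⁻¹ z) = XA := by
      apply Finset.eq_of_subset_of_card_le
      · intro z hz
        obtain ⟨a, ha, rfl⟩ := Finset.mem_image.1 hz
        obtain ⟨ha1, ha2⟩ := Finset.mem_filter.1 ha
        exact Finset.mem_filter.2 ⟨hmapsinv a ha1, hA a ha1 ha2⟩
      · rw [Finset.card_image_of_injective _ (Equiv.injective _)]
    have hB : ∀ z ∈ X, z.1 = j₂ → (g⁻¹ z).1 = j₂ := by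
      intro z hz hz2
      by_contra hne
      have h1 := hmapsinv z hz
      have h2 : (g⁻¹ z).1 = j₁ := by
        rcases (hXmem _).1 h1 with h | h
        · exact h.1
        · exact absurd h.1 hne
      have h3 : g⁻¹ z ∈ XA := Finset.mem_filter.2 ⟨h1, h2⟩
      rw [← himg] at h3
      obtain ⟨a, ha, ha2⟩ := Finset.mem_image.1 h3
      have : a = z := (Equiv.injective _) ha2
      subst this
      exact hjne (((Finset.mem_filter.1 ha).2).symm.trans hz2)
    have hallinv : ∀ z : Cell N m, (g⁻¹ z).1 = z.1 := by
      intro z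
      by_cases hz : z ∈ X
      · rcases (hXmem _).1 hz with h | h
        · rw [hA z hz h.1, h.1]
        · rw [hB z hz h.1, h.1]
      · rw [hfix' z hz]
    apply hgnc
    intro z
    have := hallinv (g z)
    rw [perm_inv_apply_self] at this
    exact this.symm
  obtain ⟨z₀, hz₀X, hz₀1, hz₀2⟩ := exA
  -- pass to integers
  set b : ℤ := (S ⟨j₂, i₂⟩ : ℤ) with hb
  set Tm : Cell N m → ℤ := fun z => (((g⁻¹ z).1 : ℕ) - (z.1 : ℕ) : ℤ) * ((S z : ℤ) - b)
    with hTm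
  have hsum : ∑ z : Cell N m, Tm z = (mu (fun z => S (g z)) : ℤ) - (mu S : ℤ) := by
    have h1 : (mu (fun z => S (g z)) : ℤ) = ∑ z : Cell N m, ((g⁻¹ z).1 : ℤ) * (S z : ℤ) := by
      unfold mu
      push_cast
      calc ∑ z : Cell N m, (z.1 : ℤ) * (S (g z) : ℤ)
          = ∑ z : Cell N m, ((g⁻¹ (g z)).1 : ℤ) * (S (g z) : ℤ) := by
            refine Finset.sum_congr rfl fun z _ => by rw [perm_inv_apply_self]
        _ = ∑ z : Cell N m, ((g⁻¹ z).1 : ℤ) * (S z : ℤ) :=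
            Equiv.sum_comp g (fun z => ((g⁻¹ z).1 : ℤ) * (S z : ℤ))
    have h2 : (mu S : ℤ) = ∑ z : Cell N m, (z.1 : ℤ) * (S z : ℤ) := by
      unfold mu; push_cast; rfl
    have h3 : ∑ z : Cell N m, ((g⁻¹ z).1 : ℤ) * b = ∑ z : Cell N m, (z.1 : ℤ) * b := by
      exact Equiv.sum_comp g⁻¹ (fun z => (z.1 : ℤ) * b)
    have h4 : ∑ z : Cell N m, Tm z =
        (∑ z : Cell N m, ((g⁻¹ z).1 : ℤ) * (S z : ℤ)) -
        (∑ z : Cell N m, (z.1 : ℤ) * (S z : ℤ)) -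
        ((∑ z : Cell N m, ((g⁻¹ z).1 : ℤ) * b) - ∑ z : Cell N m, (z.1 : ℤ) * b) := by
      rw [← Finset.sum_sub_distrib, ← Finset.sum_sub_distrib, ← Finset.sum_sub_distrib]
      refine Finset.sum_congr rfl fun z _ => ?_
      simp only [hTm]
      push_cast
      ring
    rw [h4, h3, sub_self, sub_zero, h1, h2]
  have hSlow : ∀ z : Cell N m, z.1 = j₂ → (z.2 : ℕ) ≤ (i₂ : ℕ) → S z ≤ S ⟨j₂, i₂⟩ :=
    fun z h1 h2 => hcs.le (by rw [h1]) h2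
  have hShigh : ∀ z : Cell N m, z.1 = j₁ → (i₁ : ℕ) ≤ (z.2 : ℕ) → S ⟨j₁, i₁⟩ ≤ S z :=
    fun z h1 h2 => hcs.le (by rw [h1]) h2
  have hnonneg : ∀ z : Cell N m, 0 ≤ Tm z := by
    intro z
    simp only [hTm]
    by_cases hz : z ∈ X
    · rcases (hXmem _).1 hz with ⟨h1, h2⟩ | ⟨h1, h2⟩
      · -- column j₁, value ≥ S x > b
        apply mul_nonneg
        · have := hmapsinv z hz
          rcases (hXmem _).1 this with h | h
          · rw [h.1, h1]; simp
          · rw [h.1, h1]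
            have := le_of_lt hjlt
            omega
        · have hge := hShigh z h1 h2
          have : S ⟨j₂, i₂⟩ < S z := lt_of_lt_of_le hviol hge
          rw [hb]
          have : (b : ℤ) < (S z : ℤ) := by rw [hb]; exact_mod_cast this
          omega
      · -- column j₂
        have hf1 : (((g⁻¹ z).1 : ℕ) - (z.1 : ℕ) : ℤ) ≤ 0 := by
          have := hmapsinv z hz
          rcases (hXmem _).1 this with h | h
          · rw [h.1, h1]
            have := le_of_lt hjlt
            omega
          · rw [h.1, h1]; simp
        have hf2 : (S z : ℤ) - b ≤ 0 := by
          have hle := hSlow z h1 h2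
          have : (S z : ℤ) ≤ b := by rw [hb]; exact_mod_cast hle
          omega
        nlinarith
    · have hz' := hfix' z hz
      rw [hz']
      simp
  have hpos : 0 < Tm z₀ := by
    simp only [hTm]
    apply mul_pos
    · rw [hz₀2, hz₀1]
      have : (j₁ : ℕ) < (j₂ : ℕ) := hjlt
      omega
    · rcases (hXmem _).1 hz₀X with ⟨h1, h2⟩ | ⟨h1, h2⟩
      · have hge := hShigh z₀ h1 h2
        have : S ⟨j₂, i₂⟩ < S z₀ := lt_of_lt_of_le hviol hge
        have : (b : ℤ) < (S z₀ : ℤ) := by rw [hb]; exact_mod_cast this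
        omega
      · exact absurd (h1.symm.trans hz₀1).symm hjne
  have hposum : 0 < ∑ z : Cell N m, Tm z := by
    apply Finset.sum_pos' (fun z _ => hnonneg z) ⟨z₀, Finset.mem_univ _, hpos⟩
  rw [hsum] at hposum
  have := sub_pos.1 hposum
  exact_mod_cast this

lemma fin_filter_card (k : ℕ) (p : ℕ → Prop) [DecidablePred p] :
    (Finset.univ.filter fun i : Fin k => p (i : ℕ)).card = ((Finset.range k).filter p).card := by
  refine Finset.card_bij (i := fun i _ => (i : ℕ)) ?_ ?_ ?_
  · intro i hi
    exact Finset.mem_filter.2 ⟨Finset.mem_range.2 i.isLt, (Finset.mem_filter.1 hi).2⟩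
  · intro a _ b _ h
    exact Fin.ext h
  · intro b hb
    obtain ⟨hb1, hb2⟩ := Finset.mem_filter.1 hb
    exact ⟨⟨b, Finset.mem_range.1 hb1⟩, Finset.mem_filter.2 ⟨Finset.mem_univ _, hb2⟩, rfl⟩

lemma fin_count_ge (k a : ℕ) :
    (Finset.univ.filter fun i : Fin k => a ≤ (i : ℕ)).card = k - a := by
  classical
  rw [fin_filter_card k (fun x => a ≤ x)]
  have : ((Finset.range k).filter fun x => a ≤ x) = Finset.Ico a k := by
    ext x
    simp [Finset.mem_Ico, Finset.mem_range, Finset.mem_filter]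
    omega
  rw [this, Nat.card_Ico]

lemma fin_count_le (k a : ℕ) :
    (Finset.univ.filter fun i : Fin k => (i : ℕ) ≤ a).card = min (a + 1) k := by
  classical
  rw [fin_filter_card k (fun x => x ≤ a)]
  have : ((Finset.range k).filter fun x => x ≤ a) = Finset.range (min (a + 1) k) := by
    ext x
    simp [Finset.mem_range, Finset.mem_filter]
    omega
  rw [this, Finset.card_range]

lemma cell_count (j : Fin N) (p : ℕ → Prop) [DecidablePred p] :
    (Finset.univ.filter fun z : Cell N m => z.1 = j ∧ p (z.2 : ℕ)).card =
      (Finset.univ.filter fun i : Fin (m j) => p (i : ℕ)).card := by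
  symm
  apply Finset.card_bij (fun i _ => (⟨j, i⟩ : Cell N m))
  · intro i hi
    exact Finset.mem_filter.2 ⟨Finset.mem_univ _, rfl, (Finset.mem_filter.1 hi).2⟩
  · intro a _ b _ h
    simpa using h
  · rintro ⟨z1, z2⟩ hz
    obtain ⟨-, hz1, hz2⟩ := Finset.mem_filter.1 hz
    dsimp at hz1 hz2
    subst hz1
    exact ⟨z2, Finset.mem_filter.2 ⟨Finset.mem_univ _, hz2⟩, rfl⟩

lemma X_card (j₁ j₂ : Fin N) (hjne : j₁ ≠ j₂) (i₁ : Fin (m j₁)) (i₂ : Fin (m j₂))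
    (hrow : (i₁ : ℕ) = (i₂ : ℕ)) :
    m j₁ < (Finset.univ.filter fun z : Cell N m =>
      (z.1 = j₁ ∧ (i₁ : ℕ) ≤ (z.2 : ℕ)) ∨ (z.1 = j₂ ∧ (z.2 : ℕ) ≤ (i₂ : ℕ))).card := by
  classical
  rw [Finset.filter_or, Finset.card_union_of_disjoint]
  · rw [cell_count j₁ (fun v => (i₁ : ℕ) ≤ v), cell_count j₂ (fun v => v ≤ (i₂ : ℕ)),
      fin_count_ge, fin_count_le]
    have h1 : (i₁ : ℕ) < m j₁ := i₁.isLt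
    have h2 : (i₂ : ℕ) < m j₂ := i₂.isLt
    omega
  · rw [Finset.disjoint_left]
    intro z hz1 hz2
    obtain ⟨-, h1, -⟩ := Finset.mem_filter.1 hz1
    obtain ⟨-, h2, -⟩ := Finset.mem_filter.1 hz2
    exact hjne (h1.symm.trans h2)

lemma sq_sign_smul {M : Type} [AddCommGroup M] [Module K M] {α : Type} [DecidableEq α]
    [Fintype α] (q : Equiv.Perm α) (v : M) :
    ((Equiv.Perm.sign q : ℤ) : K) • ((Equiv.Perm.sign q : ℤ) : K) • v = v := by
  rw [smul_smul, ← Int.cast_mul, ← Units.val_mul, Int.units_mul_self]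
  simp

/-- **Straightening**: every symmetrized tensor of a filling lies in the span of the
symmetrized tensors of semistandard fillings. -/
lemma straighten [CharZero K] (hm : Antitone m) (T : Fin d ≃ Cell N m) :
    ∀ (k : ℕ) (S : Cell N m → Fin n),
      (∑ z : Cell N m, ((z.1 : ℕ) + 1) * n) - mu S ≤ k →
      youngSym K V d m T (tb bv (S ∘ T)) ∈ Submodule.span K
        (Set.range fun S0 : {S0 : Cell N m → Fin n // IsSemistdFilling m S0} =>
          youngSym K V d m T (PiTensorProduct.tprod K fun i => bv (S0.1 (T i)))) := by
  classical
  intro k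
  induction k with
  | zero =>
    intro S hS
    by_cases hE : IsEmpty (Cell N m)
    · exact Submodule.subset_span
        ⟨⟨S, fun x => (hE.false x).elim, fun x => (hE.false x).elim⟩, rfl⟩
    · exfalso
      rw [not_isEmpty_iff] at hE
      obtain ⟨z₀⟩ := hE
      have hn : 0 < n := lt_of_le_of_lt (Nat.zero_le _) (S z₀).isLt
      have h1 : mu S < ∑ z : Cell N m, ((z.1 : ℕ) + 1) * n := by
        apply Finset.sum_lt_sum_of_nonempty ⟨z₀, Finset.mem_univ _⟩
        intro z _
        have h2 : (z.1 : ℕ) * (S z : ℕ) ≤ (z.1 : ℕ) * n :=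
          Nat.mul_le_mul_left _ (le_of_lt (S z).isLt)
        calc (z.1 : ℕ) * (S z : ℕ) ≤ (z.1 : ℕ) * n := h2
          _ < (z.1 : ℕ) * n + n := by omega
          _ = ((z.1 : ℕ) + 1) * n := (add_one_mul _ _).symm
      omega
  | succ k ih =>
    intro S hS
    by_cases hrep : ∃ x y : Cell N m, x ≠ y ∧ x.1 = y.1 ∧ S x = S y
    · obtain ⟨x, y, hne, hcol, hval⟩ := hrep
      rw [young_repeat_zero bv T S hne hcol hval]
      exact Submodule.zero_mem _
    · push_neg at hrep
      have hinj : ∀ x y : Cell N m, x.1 = y.1 → S x = S y → x = y := fun x y h1 h2 =>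
        by_contra fun h => hrep x y h h1 h2
      obtain ⟨q, hqcol, hqstrict⟩ := exists_sortPerm S hinj
      set S' : Cell N m → Fin n := fun z => S (q z) with hS'def
      have hmu' : mu S' = mu S := mu_comp_colperm S q hqcol
      have hrel : youngSym K V d m T (tb bv (S' ∘ T)) =
          ((Equiv.Perm.sign q : ℤ) : K) • youngSym K V d m T (tb bv (S ∘ T)) :=
        young_comp_col bv T S hqcol
      have hrel2 : youngSym K V d m T (tb bv (S ∘ T)) =
          ((Equiv.Perm.sign q : ℤ) : K) • youngSym K V d m T (tb bv (S' ∘ T)) := by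
        rw [hrel, sq_sign_smul]
      rw [hrel2]
      apply Submodule.smul_mem
      have hSP : ∀ (W : Cell N m → Fin n), mu S < mu W →
          youngSym K V d m T (tb bv (W ∘ T)) ∈ Submodule.span K
            (Set.range fun S0 : {S0 : Cell N m → Fin n // IsSemistdFilling m S0} =>
              youngSym K V d m T (PiTensorProduct.tprod K fun i => bv (S0.1 (T i)))) := by
        intro W hW
        exact ih W (by omega)
      by_cases hss : IsSemistdFilling m S'
      · exact Submodule.subset_span ⟨⟨S', hss⟩, rfl⟩
      -- there is a row violation
      have hviol : ∃ x y : Cell N m, (x.2 : ℕ) = (y.2 : ℕ) ∧ x.1 < y.1 ∧ S' y < S' x := by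
        rw [IsSemistdFilling, not_and_or] at hss
        rcases hss with hss | hss
        · push_neg at hss
          obtain ⟨x, y, h1, h2, h3⟩ := hss
          refine ⟨x, y, h1, ?_, h3⟩
          rcases lt_or_eq_of_le h2 with h | h
          · exact h
          · exfalso
            rw [cellExt h h1] at h3
            exact lt_irrefl _ h3
        · exact absurd (fun x y h1 h2 => hqstrict x y h1 h2) hss
      obtain ⟨x, y, hrow, hjlt, hviolxy⟩ := hviol
      have hjne : x.1 ≠ y.1 := ne_of_lt hjlt
      have hmle : m y.1 ≤ m x.1 := hm (le_of_lt hjlt)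
      set X : Finset (Cell N m) := Finset.univ.filter (fun z =>
        (z.1 = x.1 ∧ ((x.2 : ℕ)) ≤ (z.2 : ℕ)) ∨ (z.1 = y.1 ∧ (z.2 : ℕ) ≤ ((y.2 : ℕ))))
        with hXdef
      have hXmem : ∀ z : Cell N m, z ∈ X ↔
          (z.1 = x.1 ∧ ((x.2 : ℕ)) ≤ (z.2 : ℕ)) ∨ (z.1 = y.1 ∧ (z.2 : ℕ) ≤ ((y.2 : ℕ))) := by
        intro z
        rw [hXdef, Finset.mem_filter]
        simp
      have hcard : m x.1 < X.card := X_card x.1 y.1 hjne x.2 y.2 hrow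
      have hXcols : ∀ z ∈ X, z.1 = x.1 ∨ z.1 = y.1 := by
        intro z hz
        rcases (hXmem z).1 hz with h | h
        · exact Or.inl h.1
        · exact Or.inr h.1
      have hgar := garnir bv T S' X x.1 y.1 hjne hmle hXcols hcard
      rw [← Finset.sum_filter_add_sum_filter_not (permsOn X)
        (fun g => ∀ z, (g z).1 = z.1)] at hgar
      have hHterm : ∀ g ∈ (permsOn X).filter (fun g => ∀ z, (g z).1 = z.1),
          ((Equiv.Perm.sign g : ℤ) : K) • youngSym K V d m T (tb bv ((S' ∘ g) ∘ T)) =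
            youngSym K V d m T (tb bv (S' ∘ T)) := by
        intro g hg
        have hgcol := (Finset.mem_filter.1 hg).2
        have := young_comp_col bv T S' hgcol
        rw [show (S' ∘ ⇑g) ∘ ⇑T = S' ∘ ⇑g ∘ ⇑T from rfl, this, sq_sign_smul]
      rw [Finset.sum_congr rfl hHterm, Finset.sum_const] at hgar
      set H := (permsOn X).filter (fun g => ∀ z, (g z).1 = z.1) with hH
      have hcardH : 0 < H.card := by
        rw [Finset.card_pos]
        exact ⟨1, Finset.mem_filter.2 ⟨permsOn_one, fun z => rfl⟩⟩
      have hrest : (∑ g ∈ (permsOn X).filter (fun g => ¬ ∀ z, (g z).1 = z.1),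
          ((Equiv.Perm.sign g : ℤ) : K) •
            youngSym K V d m T (tb bv ((S' ∘ g) ∘ T))) ∈ Submodule.span K
          (Set.range fun S0 : {S0 : Cell N m → Fin n // IsSemistdFilling m S0} =>
            youngSym K V d m T (PiTensorProduct.tprod K fun i => bv (S0.1 (T i)))) := by
        apply Submodule.sum_mem
        intro g hg
        obtain ⟨hgX, hgnc⟩ := Finset.mem_filter.1 hg
        apply Submodule.smul_mem
        have hmulg : mu S < mu (fun z => S' (g z)) := by
          rw [← hmu']
          exact mu_lt_garnir S' hqstrict hjlt hrow hviolxy X hXmem hgX hgnc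
        exact hSP (fun z => S' (g z)) hmulg
      -- solve for the sorted term
      have hvmem : (H.card : K) • youngSym K V d m T (tb bv (S' ∘ T)) ∈ Submodule.span K
          (Set.range fun S0 : {S0 : Cell N m → Fin n // IsSemistdFilling m S0} =>
            youngSym K V d m T (PiTensorProduct.tprod K fun i => bv (S0.1 (T i)))) := by
        have heq : (H.card : K) • youngSym K V d m T (tb bv (S' ∘ T)) =
            - ∑ g ∈ (permsOn X).filter (fun g => ¬ ∀ z, (g z).1 = z.1),
              ((Equiv.Perm.sign g : ℤ) : K) •
                youngSym K V d m T (tb bv ((S' ∘ g) ∘ T)) := by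
          rw [eq_neg_iff_add_eq_zero, ← hgar]
          congr 1
          rw [Nat.cast_smul_eq_nsmul]
        rw [heq]
        exact Submodule.neg_mem _ hrest
      have : youngSym K V d m T (tb bv (S' ∘ T)) =
          (H.card : K)⁻¹ • ((H.card : K) • youngSym K V d m T (tb bv (S' ∘ T))) := by
        rw [smul_smul, inv_mul_cancel₀ (Nat.cast_ne_zero.2 (Nat.pos_iff_ne_zero.1 hcardH)),
          one_smul]
      rw [this]
      exact Submodule.smul_mem _ _ hvmem

/-- the pure tensors of basis vectors span everything -/
lemma span_tb : Submodule.span K (Set.range (tb bv (d := d))) = ⊤ := by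
  set W := Submodule.span K (Set.range (tb bv (d := d))) with hW
  have hmem : ∀ v : Fin d → V, (PiTensorProduct.tprod K (s := fun _ : Fin d => V)) v ∈ W := by
    have hzero : (W.mkQ).compMultilinearMap
        (PiTensorProduct.tprod K (s := fun _ : Fin d => V)) = 0 := by
      apply Module.Basis.ext_multilinear (fun _ => bv)
      intro v
      simp only [LinearMap.compMultilinearMap_apply, MultilinearMap.zero_apply]
      rw [Submodule.mkQ_apply, Submodule.Quotient.mk_eq_zero]
      exact Submodule.subset_span ⟨v, rfl⟩
    intro v
    have := congrArg (fun Φ => Φ v) hzero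
    simp only [LinearMap.compMultilinearMap_apply, MultilinearMap.zero_apply] at this
    rw [Submodule.mkQ_apply, Submodule.Quotient.mk_eq_zero] at this
    exact this
  rw [eq_top_iff, ← PiTensorProduct.span_tprod_eq_top, Submodule.span_le]
  rintro x ⟨v, rfl⟩
  exact hmem v

lemma phi_young (T : Fin d ≃ Cell N m) (f g : Fin d → Fin n) :
    phi bv g (youngSym K V d m T (tb bv f)) =
      ∑ τ ∈ colPerms d m T, ∑ σ ∈ rowPerms d m T,
        (sgn τ : K) * (if f ∘ τ ∘ σ = g then 1 else 0) := by
  rw [young_tb, map_sum]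
  refine Finset.sum_congr rfl fun τ _ => ?_
  rw [map_sum]
  refine Finset.sum_congr rfl fun σ _ => ?_
  rw [map_smul, phi_tb, smul_eq_mul]

section Stats

variable (S : Cell N m → Fin n)

/-- number of cells in rows `< r` with entry `≤ t` -/
def Nstat (t : Fin n) (r : ℕ) : ℕ :=
  (Finset.univ.filter fun z : Cell N m => S z ≤ t ∧ (z.2 : ℕ) < r).card

/-- number of entries `≤ t` in column `j` -/
def ccnt (j : Fin N) (t : Fin n) : ℕ :=
  (Finset.univ.filter fun i : Fin (m j) => S ⟨j, i⟩ ≤ t).card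

lemma ccnt_le (j : Fin N) (t : Fin n) : ccnt S j t ≤ m j := by
  unfold ccnt
  calc (Finset.univ.filter fun i : Fin (m j) => S ⟨j, i⟩ ≤ t).card
      ≤ (Finset.univ : Finset (Fin (m j))).card := Finset.card_filter_le _ _
    _ = m j := by rw [Finset.card_univ, Fintype.card_fin]

end Stats

lemma fin_downclosed {k : ℕ} (A : Finset (Fin k))
    (hA : ∀ i j : Fin k, (j : ℕ) ≤ (i : ℕ) → i ∈ A → j ∈ A) (i : Fin k) :
    i ∈ A ↔ (i : ℕ) < A.card := by
  constructor
  · intro hi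
    have hsub : Finset.Iic i ⊆ A := fun j hj =>
      hA i j (Fin.le_def.1 (Finset.mem_Iic.1 hj)) hi
    have h1 := Finset.card_le_card hsub
    rw [Fin.card_Iic] at h1
    omega
  · intro hi
    by_contra hni
    have hsub : A ⊆ Finset.Iio i := by
      intro a ha
      rw [Finset.mem_Iio]
      by_contra hai
      push_neg at hai
      exact hni (hA a i (Fin.le_def.1 hai) ha)
    have h1 := Finset.card_le_card hsub
    rw [Fin.card_Iio] at h1
    omega

lemma colStrict_le_iff {S : Cell N m → Fin n} (hcs : ColStrict S) (j : Fin N) (t : Fin n)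
    (i : Fin (m j)) : S ⟨j, i⟩ ≤ t ↔ (i : ℕ) < ccnt S j t := by
  classical
  have := fin_downclosed (Finset.univ.filter fun i : Fin (m j) => S ⟨j, i⟩ ≤ t)
    (fun a b hle ha => by
      rw [Finset.mem_filter] at ha ⊢
      refine ⟨Finset.mem_univ _, le_trans ?_ ha.2⟩
      exact hcs.le (x := ⟨j, b⟩) (y := ⟨j, a⟩) rfl hle) i
  rw [Finset.mem_filter] at this
  unfold ccnt
  rw [← this]
  simp

lemma cell_count' (j : Fin N) (p : Cell N m → Prop) [DecidablePred p] :
    (Finset.univ.filter fun z : Cell N m => p z ∧ z.1 = j).card =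
      (Finset.univ.filter fun i : Fin (m j) => p ⟨j, i⟩).card := by
  symm
  apply Finset.card_bij (fun i _ => (⟨j, i⟩ : Cell N m))
  · intro i hi
    exact Finset.mem_filter.2 ⟨Finset.mem_univ _, (Finset.mem_filter.1 hi).2, rfl⟩
  · intro a _ b _ h
    simpa using h
  · rintro ⟨z1, z2⟩ hz
    obtain ⟨-, hz2, hz1⟩ := Finset.mem_filter.1 hz
    dsimp at hz1
    subst hz1
    exact ⟨z2, Finset.mem_filter.2 ⟨Finset.mem_univ _, hz2⟩, rfl⟩

lemma Nstat_eq_sum (S : Cell N m → Fin n) (t : Fin n) (r : ℕ) :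
    Nstat S t r = ∑ j : Fin N,
      (Finset.univ.filter fun i : Fin (m j) => S ⟨j, i⟩ ≤ t ∧ (i : ℕ) < r).card := by
  classical
  unfold Nstat
  rw [Finset.card_eq_sum_card_fiberwise (f := Sigma.fst) (t := Finset.univ)
    (fun x _ => Finset.mem_univ _)]
  refine Finset.sum_congr rfl fun j _ => ?_
  rw [Finset.filter_filter]
  exact cell_count' j (fun z => S z ≤ t ∧ (z.2 : ℕ) < r)

lemma fin_count_lt (k a : ℕ) :
    (Finset.univ.filter fun i : Fin k => (i : ℕ) < a).card = min a k := by
  classical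
  rw [fin_filter_card k (fun x => x < a)]
  have : ((Finset.range k).filter fun x => x < a) = Finset.range (min a k) := by
    ext x
    simp [Finset.mem_range, Finset.mem_filter]
    omega
  rw [this, Finset.card_range]

lemma colStrict_column_card {S : Cell N m → Fin n} (hcs : ColStrict S) (j : Fin N)
    (t : Fin n) (r : ℕ) :
    (Finset.univ.filter fun i : Fin (m j) => S ⟨j, i⟩ ≤ t ∧ (i : ℕ) < r).card =
      min r (ccnt S j t) := by
  classical
  have heq : (Finset.univ.filter fun i : Fin (m j) => S ⟨j, i⟩ ≤ t ∧ (i : ℕ) < r) =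
      Finset.univ.filter fun i : Fin (m j) => (i : ℕ) < min r (ccnt S j t) := by
    apply Finset.filter_congr
    intro i _
    rw [colStrict_le_iff hcs, lt_min_iff, and_comm]
  rw [heq, fin_count_lt]
  have := ccnt_le S j t
  omega

lemma Nstat_colStrict {S : Cell N m → Fin n} (hcs : ColStrict S) (t : Fin n) (r : ℕ) :
    Nstat S t r = ∑ j : Fin N, min r (ccnt S j t) := by
  rw [Nstat_eq_sum]
  exact Finset.sum_congr rfl fun j _ => colStrict_column_card hcs j t r

lemma Nstat_rowperm (S : Cell N m → Fin n) (p : Equiv.Perm (Cell N m))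
    (hp : ∀ z, ((p z).2 : ℕ) = (z.2 : ℕ)) (t : Fin n) (r : ℕ) :
    Nstat (fun z => S (p z)) t r = Nstat S t r := by
  classical
  unfold Nstat
  apply Finset.card_bij (fun z _ => p z)
  · intro z hz
    obtain ⟨-, h1, h2⟩ := Finset.mem_filter.1 hz
    exact Finset.mem_filter.2 ⟨Finset.mem_univ _, h1, by rw [hp z]; exact h2⟩
  · intro a _ b _ h
    exact p.injective h
  · intro z hz
    obtain ⟨-, h1, h2⟩ := Finset.mem_filter.1 hz
    refine ⟨p⁻¹ z, Finset.mem_filter.2 ⟨Finset.mem_univ _, ?_, ?_⟩, by simp⟩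
    · show S (p (p⁻¹ z)) ≤ t
      rw [perm_apply_inv_self]
      exact h1
    · have := hp (p⁻¹ z)
      rw [perm_apply_inv_self] at this
      omega
  
lemma Nstat_colperm_le {S : Cell N m → Fin n} (hcs : ColStrict S) (q : Equiv.Perm (Cell N m))
    (hq : ∀ z, (q z).1 = z.1) (t : Fin n) (r : ℕ) :
    Nstat (fun z => S (q z)) t r ≤ Nstat S t r := by
  classical
  rw [Nstat_eq_sum, Nstat_colStrict hcs]
  apply Finset.sum_le_sum
  intro j _
  apply le_min
  · calc (Finset.univ.filter fun i : Fin (m j) => S (q ⟨j, i⟩) ≤ t ∧ (i : ℕ) < r).card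
        ≤ (Finset.univ.filter fun i : Fin (m j) => (i : ℕ) < r).card := by
          apply Finset.card_le_card
          intro i hi
          exact Finset.mem_filter.2 ⟨Finset.mem_univ _, (Finset.mem_filter.1 hi).2.2⟩
      _ = min r (m j) := fin_count_lt _ _
      _ ≤ r := min_le_left _ _
  · have hfst : ∀ i : Fin (m j), (q ⟨j, i⟩).1 = j := fun i => hq ⟨j, i⟩
    set ι : Fin (m j) → Fin (m j) := fun i => Fin.cast (congrArg m (hfst i)) (q ⟨j, i⟩).2
      with hι
    have hcell : ∀ i : Fin (m j), (⟨j, ι i⟩ : Cell N m) = q ⟨j, i⟩ := by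
      intro i
      exact (cellExt (hfst i) (by simp [hι])).symm
    unfold ccnt
    apply Finset.card_le_card_of_injOn ι
    · intro i hi
      obtain ⟨-, h1, -⟩ := Finset.mem_filter.1 hi
      refine Finset.mem_filter.2 ⟨Finset.mem_univ _, ?_⟩
      rw [hcell i]
      exact h1
    · intro a _ b _ hab
      have : q ⟨j, a⟩ = q ⟨j, b⟩ := by rw [← hcell a, ← hcell b, hab]
      have := q.injective this
      simpa using this

lemma ccnt_antitone (hm : Antitone m) {S : Cell N m → Fin n} (hS : IsSemistdFilling m S)
    {t : Fin n} {j j' : Fin N} (hjj : j ≤ j') : ccnt S j' t ≤ ccnt S j t := by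
  classical
  unfold ccnt
  apply Finset.card_le_card_of_injOn (fun i => Fin.castLE (hm hjj) i)
  · intro i hi
    obtain ⟨-, h1⟩ := Finset.mem_filter.1 hi
    refine Finset.mem_filter.2 ⟨Finset.mem_univ _, le_trans ?_ h1⟩
    exact hS.1 ⟨j, Fin.castLE (hm hjj) i⟩ ⟨j', i⟩ (by simp) hjj
  · intro a _ b _ hab
    exact Fin.ext (by simpa using congrArg (fun x : Fin (m j) => (x : ℕ)) hab)

lemma Nstat_succ {S : Cell N m → Fin n} (hcs : ColStrict S) (t : Fin n) (r : ℕ) :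
    Nstat S t (r + 1) = Nstat S t r +
      (Finset.univ.filter fun j : Fin N => r < ccnt S j t).card := by
  classical
  rw [Nstat_colStrict hcs, Nstat_colStrict hcs]
  have h1 : ∀ j : Fin N, min (r + 1) (ccnt S j t) =
      min r (ccnt S j t) + (if r < ccnt S j t then 1 else 0) := by
    intro j
    by_cases h : r < ccnt S j t <;> simp [h] <;> omega
  rw [Finset.sum_congr rfl fun j _ => h1 j, Finset.sum_add_distrib]
  congr 1
  rw [Finset.sum_boole]
  simp

/-- semistandard fillings are determined by their statistics -/
lemma ssyt_eq_of_Nstat (hm : Antitone m) {S S' : Cell N m → Fin n}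
    (hS : IsSemistdFilling m S) (hS' : IsSemistdFilling m S')
    (h : ∀ t r, Nstat S t r = Nstat S' t r) : S = S' := by
  classical
  have hcs : ColStrict S := fun x y h1 h2 => hS.2 x y h1 h2
  have hcs' : ColStrict S' := fun x y h1 h2 => hS'.2 x y h1 h2
  have hcard : ∀ (t : Fin n) (r : ℕ),
      (Finset.univ.filter fun j : Fin N => r < ccnt S j t).card =
        (Finset.univ.filter fun j : Fin N => r < ccnt S' j t).card := by
    intro t r
    have h1 := Nstat_succ hcs t r
    have h2 := Nstat_succ hcs' t r
    have h3 := h t r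
    have h4 := h t (r + 1)
    omega
  have hiff : ∀ (t : Fin n) (r : ℕ) (j : Fin N), (r < ccnt S j t ↔ r < ccnt S' j t) := by
    intro t r j
    have hd1 := fin_downclosed (Finset.univ.filter fun j : Fin N => r < ccnt S j t)
      (fun a b hab ha => by
        rw [Finset.mem_filter] at ha ⊢
        refine ⟨Finset.mem_univ _, lt_of_lt_of_le ha.2 ?_⟩
        exact ccnt_antitone hm hS (show b ≤ a from hab)) j
    have hd2 := fin_downclosed (Finset.univ.filter fun j : Fin N => r < ccnt S' j t)
      (fun a b hab ha => by
        rw [Finset.mem_filter] at ha ⊢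
        refine ⟨Finset.mem_univ _, lt_of_lt_of_le ha.2 ?_⟩
        exact ccnt_antitone hm hS' (show b ≤ a from hab)) j
    have hj1 : r < ccnt S j t ↔
        (j : ℕ) < (Finset.univ.filter fun j : Fin N => r < ccnt S j t).card := by
      rw [← hd1]; simp
    have hj2 : r < ccnt S' j t ↔
        (j : ℕ) < (Finset.univ.filter fun j : Fin N => r < ccnt S' j t).card := by
      rw [← hd2]; simp
    rw [hj1, hj2, hcard t r]
  have hccnt : ∀ (t : Fin n) (j : Fin N), ccnt S j t = ccnt S' j t := by
    intro t j
    have h1 := hiff t (ccnt S j t) j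
    have h2 := hiff t (ccnt S' j t) j
    omega
  funext z
  obtain ⟨j, i⟩ := z
  have h1 : ∀ t, (S ⟨j, i⟩ ≤ t ↔ S' ⟨j, i⟩ ≤ t) := by
    intro t
    rw [colStrict_le_iff hcs, colStrict_le_iff hcs', hccnt t j]
  exact le_antisymm ((h1 (S' ⟨j, i⟩)).2 (le_refl _)) ((h1 (S ⟨j, i⟩)).1 (le_refl _))

/-- if a column permutation and a row permutation act identically on a column-strict
filling, the column permutation is trivial -/
lemma colrow_eq_one {S : Cell N m → Fin n} (hcs : ColStrict S) (q p : Equiv.Perm (Cell N m))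
    (hq : ∀ z, (q z).1 = z.1) (hp : ∀ z, ((p z).2 : ℕ) = (z.2 : ℕ))
    (h : ∀ z, S (q z) = S (p z)) : q = 1 := by
  classical
  have main : ∀ r : ℕ, ∀ z : Cell N m, (z.2 : ℕ) < r → q z = z := by
    intro r
    induction r with
    | zero => exact fun z hz => absurd hz (Nat.not_lt_zero _)
    | succ r ih =>
      have hrowfix : ∀ z : Cell N m, (z.2 : ℕ) = r → q z = z := by
        set Rowr := Finset.univ.filter (fun z : Cell N m => (z.2 : ℕ) = r) with hRow
        have hrowge : ∀ z ∈ Rowr, (z.2 : ℕ) ≤ ((q z).2 : ℕ) := by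
          intro z hz
          have hzr := (Finset.mem_filter.1 hz).2
          by_contra hlt
          push_neg at hlt
          have hr : ((q z).2 : ℕ) < r := by omega
          have h1 := ih (q z) hr
          have h2 := q.injective h1
          rw [h2] at hlt
          omega
        have hSle : ∀ z ∈ Rowr, (S z : ℕ) ≤ (S (q z) : ℕ) := by
          intro z hz
          exact hcs.le (hq z).symm (hrowge z hz)
        have hsum : ∑ z ∈ Rowr, (S z : ℕ) = ∑ z ∈ Rowr, (S (q z) : ℕ) := by
          have e1 : ∑ z ∈ Rowr, (S (q z) : ℕ) = ∑ z ∈ Rowr, (S (p z) : ℕ) :=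
            Finset.sum_congr rfl fun z _ => by rw [h z]
          have e2 : ∑ z ∈ Rowr, (S (p z) : ℕ) = ∑ z ∈ Rowr, (S z : ℕ) := by
            refine Finset.sum_nbij' (fun z => p z) (fun z => p⁻¹ z) ?_ ?_ ?_ ?_ ?_
            · intro z hz
              have hzr := (Finset.mem_filter.1 hz).2
              refine Finset.mem_filter.2 ⟨Finset.mem_univ _, ?_⟩
              rw [hp z]
              exact hzr
            · intro z hz
              have hzr := (Finset.mem_filter.1 hz).2
              refine Finset.mem_filter.2 ⟨Finset.mem_univ _, ?_⟩
              show ((p⁻¹ z).2 : ℕ) = r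
              have := hp (p⁻¹ z)
              rw [perm_apply_inv_self] at this
              omega
            · intro z _; simp
            · intro z _; simp
            · intro z _; rfl
          rw [e1, e2]
        have hall := (Finset.sum_eq_sum_iff_of_le hSle).1 hsum
        intro z hzr
        have hzm : z ∈ Rowr := Finset.mem_filter.2 ⟨Finset.mem_univ _, hzr⟩
        have heq : (S z : ℕ) = (S (q z) : ℕ) := hall z hzm
        -- rows must agree
        have hrows : ((q z).2 : ℕ) = (z.2 : ℕ) := by
          rcases eq_or_lt_of_le (hrowge z hzm) with h' | h'
          · omega
          · exfalso
            have := hcs z (q z) (hq z).symm h'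
            omega
        exact cellExt (hq z) hrows
      intro z hz
      rcases Nat.lt_succ_iff_lt_or_eq.1 hz with h' | h'
      · exact ih z h'
      · exact hrowfix z h'
  exact Equiv.ext fun z => main ((z.2 : ℕ) + 1) z (Nat.lt_succ_self _)

lemma rows_lt_d (T : Fin d ≃ Cell N m) (z : Cell N m) : (z.2 : ℕ) < d := by
  have h1 : (z.2 : ℕ) < m z.1 := z.2.isLt
  have h2 : m z.1 ≤ Fintype.card (Cell N m) := by
    have : Function.Injective (fun i : Fin (m z.1) => (⟨z.1, i⟩ : Cell N m)) := by
      intro a b hab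
      simpa using hab
    simpa using Fintype.card_le_of_injective _ this
  have h3 : Fintype.card (Cell N m) = d := by
    rw [← Fintype.card_congr T, Fintype.card_fin]
  omega

lemma Nstat_high (T : Fin d ≃ Cell N m) (S : Cell N m → Fin n) (t : Fin n) {r : ℕ}
    (hr : d ≤ r) : Nstat S t r = Nstat S t d := by
  classical
  unfold Nstat
  congr 1
  apply Finset.filter_congr
  intro z _
  have := rows_lt_d T z
  constructor
  · intro ⟨h1, _⟩; exact ⟨h1, this⟩
  · intro ⟨h1, _⟩; exact ⟨h1, by omega⟩

/-- translate an equality of tensor-position fillings into cell permutations -/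
lemma transfer (T : Fin d ≃ Cell N m) {τ σ : Equiv.Perm (Fin d)}
    (hτ : τ ∈ colPerms d m T) (hσ : σ ∈ rowPerms d m T)
    (S S' : Cell N m → Fin n) (heq : (S ∘ ⇑T) ∘ ⇑τ ∘ ⇑σ = S' ∘ ⇑T) :
    ∃ q pc : Equiv.Perm (Cell N m), (∀ z, (q z).1 = z.1) ∧
      (∀ z, ((pc z).2 : ℕ) = (z.2 : ℕ)) ∧ (∀ z, S (q (pc z)) = S' z) ∧ (q = 1 → τ = 1) := by
  set q : Equiv.Perm (Cell N m) := T.permCongr τ with hqdef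
  set pc : Equiv.Perm (Cell N m) := T.permCongr σ with hpcdef
  have hqz : ∀ z, q z = T (τ (T.symm z)) := fun z => by rw [hqdef, Equiv.permCongr_apply]
  have hpcz : ∀ z, pc z = T (σ (T.symm z)) := fun z => by rw [hpcdef, Equiv.permCongr_apply]
  refine ⟨q, pc, ?_, ?_, ?_, ?_⟩
  · intro z
    rw [hqz z, (mem_colPerms.1 hτ) (T.symm z), Equiv.apply_symm_apply]
  · intro z
    rw [hpcz z, (mem_rowPerms.1 hσ) (T.symm z), Equiv.apply_symm_apply]
  · intro z
    have h0 := congrFun heq (T.symm z)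
    simp only [Function.comp_apply, Equiv.apply_symm_apply] at h0
    rw [hqz (pc z), hpcz z, Equiv.symm_apply_apply]
    exact h0
  · intro hq1
    refine Equiv.ext fun x => ?_
    have h1 : q (T x) = T x := by rw [hq1]; rfl
    rw [hqz (T x), Equiv.symm_apply_apply] at h1
    exact (T.injective h1).trans (Equiv.Perm.one_apply x).symm

end Aux

namespace SchurApolarity

open Aux

theorem semistandard_young_symmetrizer_basis
    (K V : Type) [Field K] [IsAlgClosed K] [CharZero K]
    [AddCommGroup V] [Module K V] [FiniteDimensional K V]
    (n : ℕ) (bv : Module.Basis (Fin n) K V)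
    (N : ℕ) (m : Fin N → ℕ) (hm : Antitone m) (hlen : ∀ j, m j < n)
    (d : ℕ) (T : Fin d ≃ Cell N m) (hT : IsStdTableau d m T) :
    LinearIndependent K
      (fun S : {S : Cell N m → Fin n // IsSemistdFilling m S} =>
        youngSym K V d m T (PiTensorProduct.tprod K fun i => bv (S.1 (T i))))
    ∧ Submodule.span K
        (Set.range fun S : {S : Cell N m → Fin n // IsSemistdFilling m S} =>
          youngSym K V d m T (PiTensorProduct.tprod K fun i => bv (S.1 (T i))))
      = LinearMap.range (youngSym K V d m T) := by
  classical
  constructor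
  · -- linear independence
    rw [linearIndependent_iff']
    intro s g hsum i hi
    by_contra hgi
    set s' := s.filter (fun j => g j ≠ 0) with hs'
    have hs'ne : s'.Nonempty := ⟨i, Finset.mem_filter.2 ⟨hi, hgi⟩⟩
    have hsum' : ∑ j ∈ s', g j •
        (youngSym K V d m T (PiTensorProduct.tprod K fun i => bv (j.1 (T i)))) = 0 := by
      rw [hs', Finset.sum_filter_of_ne]
      · exact hsum
      · intro x _ hx hgx
        apply hx
        rw [hgx, zero_smul]
    set Wt : (Cell N m → Fin n) → ℕ :=
      fun S => ∑ t : Fin n, ∑ r ∈ Finset.range (d + 1), Nstat S t r with hWtdef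
    obtain ⟨jm, hjm, hjmax⟩ := Finset.exists_max_image s' (fun j => Wt j.1) hs'ne
    have happ := congrArg (phi bv (jm.1 ∘ T)) hsum'
    rw [map_sum, map_zero] at happ
    have hterm : ∀ j : {S : Cell N m → Fin n // IsSemistdFilling m S},
        phi bv (jm.1 ∘ T) (g j •
          (youngSym K V d m T (PiTensorProduct.tprod K fun i => bv (j.1 (T i))))) =
          g j * phi bv (jm.1 ∘ T) (youngSym K V d m T (tb bv (j.1 ∘ T))) := by
      intro j
      rw [map_smul, smul_eq_mul]
      rfl
    rw [Finset.sum_congr rfl (fun j _ => hterm j)] at happ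
    -- off-diagonal terms vanish
    have hvanish : ∀ j ∈ s', j ≠ jm →
        phi bv (jm.1 ∘ T) (youngSym K V d m T (tb bv (j.1 ∘ T))) = 0 := by
      intro j hjs hne
      rw [phi_young]
      apply Finset.sum_eq_zero
      intro τ hτ
      apply Finset.sum_eq_zero
      intro σ hσ
      have hfalse : ¬ ((j.1 ∘ ⇑T) ∘ ⇑τ ∘ ⇑σ = jm.1 ∘ ⇑T) := by
        intro heq
        obtain ⟨q, pc, hqcol, hpcrow, hcomp, -⟩ := transfer T hτ hσ j.1 jm.1 heq
        have hcs : ColStrict j.1 := fun x y h1 h2 => j.2.2 x y h1 h2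
        have hNle : ∀ (t : Fin n) (r : ℕ), Nstat jm.1 t r ≤ Nstat j.1 t r := by
          intro t r
          have e3 : Nstat jm.1 t r = Nstat (fun z => (fun w => j.1 (q w)) (pc z)) t r := by
            congr 1
            funext z
            exact (hcomp z).symm
          rw [e3, Nstat_rowperm (fun w => j.1 (q w)) pc hpcrow t r]
          exact Nstat_colperm_le hcs q hqcol t r
        have hWle : Wt jm.1 ≤ Wt j.1 :=
          Finset.sum_le_sum fun t _ => Finset.sum_le_sum fun r _ => hNle t r
        have hWeq : Wt jm.1 = Wt j.1 := le_antisymm hWle (hjmax j hjs)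
        have houter := (Finset.sum_eq_sum_iff_of_le
          (fun t (_ : t ∈ Finset.univ) =>
            Finset.sum_le_sum fun r _ => hNle t r)).1 hWeq
        have hNgrid : ∀ t : Fin n, ∀ r ∈ Finset.range (d + 1),
            Nstat jm.1 t r = Nstat j.1 t r := by
          intro t r hr
          exact (Finset.sum_eq_sum_iff_of_le (fun r _ => hNle t r)).1
            (houter t (Finset.mem_univ t)) r hr
        have hNall : ∀ (t : Fin n) (r : ℕ), Nstat jm.1 t r = Nstat j.1 t r := by
          intro t r
          by_cases hr : r ≤ d
          · exact hNgrid t r (Finset.mem_range.2 (by omega))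
          · push_neg at hr
            rw [Nstat_high T jm.1 t (le_of_lt hr), Nstat_high T j.1 t (le_of_lt hr)]
            exact hNgrid t d (Finset.mem_range.2 (by omega))
        have := ssyt_eq_of_Nstat hm jm.2 j.2 hNall
        exact hne (Subtype.ext this.symm)
      rw [if_neg hfalse, mul_zero]
    -- the diagonal term is nonzero
    have hdiag : phi bv (jm.1 ∘ T) (youngSym K V d m T (tb bv (jm.1 ∘ T))) ≠ 0 := by
      rw [phi_young]
      have hone : (1 : Equiv.Perm (Fin d)) ∈ colPerms d m T := mem_colPerms.2 (fun x => rfl)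
      rw [Finset.sum_eq_single_of_mem 1 hone]
      · have hbody : ∀ σ ∈ rowPerms d m T,
            (sgn (1 : Equiv.Perm (Fin d)) : K) *
              (if (jm.1 ∘ ⇑T) ∘ ⇑(1 : Equiv.Perm (Fin d)) ∘ ⇑σ = jm.1 ∘ ⇑T then 1 else 0) =
            if (jm.1 ∘ ⇑T) ∘ ⇑(1 : Equiv.Perm (Fin d)) ∘ ⇑σ = jm.1 ∘ ⇑T then 1 else 0 := by
          intro σ _
          rw [show (sgn (1 : Equiv.Perm (Fin d)) : K) = 1 by simp [sgn], one_mul]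
        rw [Finset.sum_congr rfl hbody, Finset.sum_boole]
        have hpos : 0 < ((rowPerms d m T).filter fun σ : Equiv.Perm (Fin d) =>
            (jm.1 ∘ ⇑T) ∘ ⇑(1 : Equiv.Perm (Fin d)) ∘ ⇑σ = jm.1 ∘ ⇑T).card := by
          rw [Finset.card_pos]
          refine ⟨1, Finset.mem_filter.2 ⟨mem_rowPerms.2 fun x => rfl, ?_⟩⟩
          funext x
          rfl
        exact Nat.cast_ne_zero.2 (Nat.pos_iff_ne_zero.1 hpos)
      · intro τ hτ hτne
        apply Finset.sum_eq_zero
        intro σ hσ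
        have hfalse : ¬ ((jm.1 ∘ ⇑T) ∘ ⇑τ ∘ ⇑σ = jm.1 ∘ ⇑T) := by
          intro heq
          obtain ⟨q, pc, hqcol, hpcrow, hcomp, hq1⟩ := transfer T hτ hσ jm.1 jm.1 heq
          have hcs : ColStrict jm.1 := fun x y h1 h2 => jm.2.2 x y h1 h2
          have hset : ∀ y, jm.1 (q y) = jm.1 (pc⁻¹ y) := by
            intro y
            have := hcomp (pc⁻¹ y)
            rwa [perm_apply_inv_self] at this
          have hpinv : ∀ z, ((pc⁻¹ z).2 : ℕ) = (z.2 : ℕ) := by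
            intro z
            have := hpcrow (pc⁻¹ z)
            rw [perm_apply_inv_self] at this
            exact this.symm
          exact hτne (hq1 (colrow_eq_one hcs q pc⁻¹ hqcol hpinv hset))
        rw [if_neg hfalse, mul_zero]
    rw [Finset.sum_eq_single_of_mem jm hjm
      (fun j hj hne => by rw [hvanish j hj hne, mul_zero])] at happ
    have hgjm : g jm ≠ 0 := (Finset.mem_filter.1 hjm).2
    rcases mul_eq_zero.1 happ with h | h
    · exact hgjm h
    · exact hdiag h
  · -- spanning
    apply le_antisymm
    · rw [Submodule.span_le]
      rintro x ⟨S0, rfl⟩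
      exact ⟨tb bv (S0.1 ∘ T), rfl⟩
    · have h1 : LinearMap.range (youngSym K V d m T) =
          Submodule.map (youngSym K V d m T)
            (Submodule.span K (Set.range (tb bv (d := d)))) := by
        rw [span_tb, ← LinearMap.range_eq_map]
      rw [h1, Submodule.map_span]
      rw [Submodule.span_le]
      rintro x ⟨y, ⟨f, rfl⟩, rfl⟩
      have h2 := straighten bv hm T (∑ z : Cell N m, ((z.1 : ℕ) + 1) * n) (f ∘ T.symm)
        (Nat.sub_le _ _)
      have h3 : (f ∘ ⇑T.symm) ∘ ⇑T = f := by
        funext x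
        simp
      rw [h3] at h2
      exact h2

end SchurApolarity
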